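/- If f and g are two continuous, both increasing (or both decreasing) bijections from an interval I onto an interval J, then ∫_I |f - g| dμ = ∫_J |f⁻¹ - g⁻¹| dμ. -/

import Mathlib

open MeasureTheory

private lemma inv_mem_aux {I J : Set ℝ} {h h' : ℝ → ℝ} (hb : Set.BijOn h I J)
    (hinv : Set.InvOn h' h I J) {y : ℝ} (hy : y ∈ J) : h' y ∈ I := by
  obtain ⟨x0, hx0, rfl⟩ := hb.surjOn hy
  rw [hinv.1 hx0]; exact hx0

private lemma aux_mono {I J : Set ℝ} {h h' : ℝ → ℝ} (hb : Set.BijOn h I J)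
    (hinv : Set.InvOn h' h I J) (hm : StrictMonoOn h I) {x y : ℝ} (hx : x ∈ I) (hy : y ∈ J) :
    (h x < y → x < h' y) ∧ (y < h x → h' y < x) := by
  have h1 : h' y ∈ I := inv_mem_aux hb hinv hy
  have h2 : h (h' y) = y := hinv.2 hy
  constructor
  · intro hlt
    by_contra hc
    push_neg at hc
    have := hm.monotoneOn h1 hx hc
    rw [h2] at this; linarith
  · intro hlt
    by_contra hc
    push_neg at hc
    have := hm.monotoneOn hx h1 hc
    rw [h2] at this; linarith

private lemma aux_anti {I J : Set ℝ} {h h' : ℝ → ℝ} (hb : Set.BijOn h I J)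
    (hinv : Set.InvOn h' h I J) (hm : StrictAntiOn h I) {x y : ℝ} (hx : x ∈ I) (hy : y ∈ J) :
    (h x < y → h' y < x) ∧ (y < h x → x < h' y) := by
  have h1 : h' y ∈ I := inv_mem_aux hb hinv hy
  have h2 : h (h' y) = y := hinv.2 hy
  constructor
  · intro hlt
    by_contra hc
    push_neg at hc
    have := hm.antitoneOn hx h1 hc
    rw [h2] at this; linarith
  · intro hlt
    by_contra hc
    push_neg at hc
    have := hm.antitoneOn h1 hx hc
    rw [h2] at this; linarith

private lemma invStrictMonoAux12 {I J : Set ℝ} {h h' : ℝ → ℝ} (hb : Set.BijOn h I J)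
    (hinv : Set.InvOn h' h I J) (hm : StrictMonoOn h I) : StrictMonoOn h' J := by
  intro a ha b hbm hab
  obtain ⟨xa, hxa, rfl⟩ := hb.surjOn ha
  obtain ⟨xb, hxb, rfl⟩ := hb.surjOn hbm
  rw [hinv.1 hxa, hinv.1 hxb]
  exact (hm.lt_iff_lt hxa hxb).1 hab

private lemma invStrictAntiAux12 {I J : Set ℝ} {h h' : ℝ → ℝ} (hb : Set.BijOn h I J)
    (hinv : Set.InvOn h' h I J) (hm : StrictAntiOn h I) : StrictAntiOn h' J := by
  intro a ha b hbm hab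
  obtain ⟨xa, hxa, rfl⟩ := hb.surjOn ha
  obtain ⟨xb, hxb, rfl⟩ := hb.surjOn hbm
  rw [hinv.1 hxa, hinv.1 hxb]
  exact (hm.lt_iff_gt hxa hxb).1 hab

private lemma fwd {I J : Set ℝ} (hJ : J.OrdConnected) {f g f' g' : ℝ → ℝ}
    (hfb : Set.BijOn f I J) (hgb : Set.BijOn g I J)
    (hmono : (StrictMonoOn f I ∧ StrictMonoOn g I) ∨ (StrictAntiOn f I ∧ StrictAntiOn g I))
    (hf' : Set.InvOn f' f I J) (hg' : Set.InvOn g' g I J)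
    {x y : ℝ} (hx : x ∈ I)
    (hbtw : f x < y ∧ y < g x ∨ g x < y ∧ y < f x) :
    y ∈ J ∧ (f' y < x ∧ x < g' y ∨ g' y < x ∧ x < f' y) := by
  have hfxJ : f x ∈ J := hfb.mapsTo hx
  have hgxJ : g x ∈ J := hgb.mapsTo hx
  have hyJ : y ∈ J := by
    rcases hbtw with ⟨h1, h2⟩ | ⟨h1, h2⟩
    · exact hJ.out hfxJ hgxJ ⟨le_of_lt h1, le_of_lt h2⟩
    · exact hJ.out hgxJ hfxJ ⟨le_of_lt h1, le_of_lt h2⟩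
  refine ⟨hyJ, ?_⟩
  rcases hmono with ⟨hfm, hgm⟩ | ⟨hfm, hgm⟩
  · have Hf := aux_mono hfb hf' hfm hx hyJ
    have Hg := aux_mono hgb hg' hgm hx hyJ
    rcases hbtw with ⟨h1, h2⟩ | ⟨h1, h2⟩
    · exact Or.inr ⟨Hg.2 h2, Hf.1 h1⟩
    · exact Or.inl ⟨Hf.2 h2, Hg.1 h1⟩
  · have Hf := aux_anti hfb hf' hfm hx hyJ
    have Hg := aux_anti hgb hg' hgm hx hyJ
    rcases hbtw with ⟨h1, h2⟩ | ⟨h1, h2⟩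
    · exact Or.inl ⟨Hf.1 h1, Hg.2 h2⟩
    · exact Or.inr ⟨Hg.1 h1, Hf.2 h2⟩

private lemma vol_Ioo_union (a b : ℝ) :
    volume (Set.Ioo a b ∪ Set.Ioo b a) = ENNReal.ofReal |a - b| := by
  rcases lt_trichotomy a b with h | h | h
  · rw [Set.Ioo_eq_empty (not_lt.2 h.le), Set.union_empty, Real.volume_Ioo,
      abs_of_neg (by linarith : a - b < 0)]
    ring_nf
  · subst h
    simp [Set.Ioo_eq_empty (lt_irrefl a)]
  · rw [Set.Ioo_eq_empty (not_lt.2 h.le), Set.empty_union, Real.volume_Ioo,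
      abs_of_pos (by linarith : 0 < a - b)]

theorem stmt12 (I J : Set ℝ) (hI : I.OrdConnected) (hJ : J.OrdConnected)
    (f g f' g' : ℝ → ℝ)
    (hfc : ContinuousOn f I) (hgc : ContinuousOn g I)
    (hfb : Set.BijOn f I J) (hgb : Set.BijOn g I J)
    (hmono : (StrictMonoOn f I ∧ StrictMonoOn g I) ∨ (StrictAntiOn f I ∧ StrictAntiOn g I))
    (hf' : Set.InvOn f' f I J) (hg' : Set.InvOn g' g I J) :
    ∫⁻ x in I, ENNReal.ofReal |f x - g x|
      = ∫⁻ y in J, ENNReal.ofReal |f' y - g' y| := by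
  classical
  have hIm : MeasurableSet I := hI.measurableSet
  have hJm : MeasurableSet J := hJ.measurableSet
  -- the two regions between the graphs
  set S : Set (ℝ × ℝ) :=
    {p | p.1 ∈ I ∧ (f p.1 < p.2 ∧ p.2 < g p.1 ∨ g p.1 < p.2 ∧ p.2 < f p.1)} with hS_def
  set T : Set (ℝ × ℝ) :=
    {p | p.1 ∈ J ∧ (f' p.1 < p.2 ∧ p.2 < g' p.1 ∨ g' p.1 < p.2 ∧ p.2 < f' p.1)} with hT_def
  -- inverse data
  have hfb' : Set.BijOn f' J I := Set.BijOn.symm hf'.symm hfb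
  have hgb' : Set.BijOn g' J I := Set.BijOn.symm hg'.symm hgb
  have hf'' : Set.InvOn f f' J I := hf'.symm
  have hg'' : Set.InvOn g g' J I := hg'.symm
  have hmono' : (StrictMonoOn f' J ∧ StrictMonoOn g' J) ∨
      (StrictAntiOn f' J ∧ StrictAntiOn g' J) := by
    rcases hmono with ⟨h1, h2⟩ | ⟨h1, h2⟩
    · exact Or.inl ⟨invStrictMonoAux12 hfb hf' h1, invStrictMonoAux12 hgb hg' h2⟩
    · exact Or.inr ⟨invStrictAntiAux12 hfb hf' h1, invStrictAntiAux12 hgb hg' h2⟩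
  -- S is the reflection of T
  have hST : S = Prod.swap ⁻¹' T := by
    ext ⟨x, y⟩
    simp only [hS_def, hT_def, Set.mem_setOf_eq, Set.mem_preimage, Prod.swap_prod_mk]
    constructor
    · rintro ⟨hx, hb⟩
      exact fwd hJ hfb hgb hmono hf' hg' hx hb
    · rintro ⟨hy, hb⟩
      exact fwd hI hfb' hgb' hmono' hf'' hg'' hy hb
  -- measurability of S
  set F : ℝ → ℝ := I.piecewise f (fun _ => 0) with hF_def
  set G : ℝ → ℝ := I.piecewise g (fun _ => 0) with hG_def
  have hFm : Measurable F := hfc.measurable_piecewise continuousOn_const hIm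
  have hGm : Measurable G := hgc.measurable_piecewise continuousOn_const hIm
  have hSF : S = {p : ℝ × ℝ | p.1 ∈ I} ∩
      (({p : ℝ × ℝ | F p.1 < p.2} ∩ {p : ℝ × ℝ | p.2 < G p.1}) ∪
       ({p : ℝ × ℝ | G p.1 < p.2} ∩ {p : ℝ × ℝ | p.2 < F p.1})) := by
    ext ⟨x, y⟩
    simp only [hS_def, Set.mem_setOf_eq, Set.mem_inter_iff, Set.mem_union]
    constructor
    · rintro ⟨hx, hb⟩
      refine ⟨hx, ?_⟩
      rw [hF_def, hG_def, Set.piecewise_eq_of_mem _ _ _ hx, Set.piecewise_eq_of_mem _ _ _ hx]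
      exact hb
    · rintro ⟨hx, hb⟩
      refine ⟨hx, ?_⟩
      rw [hF_def, hG_def, Set.piecewise_eq_of_mem _ _ _ hx,
        Set.piecewise_eq_of_mem _ _ _ hx] at hb
      exact hb
  have hSm : MeasurableSet S := by
    rw [hSF]
    exact (hIm.preimage measurable_fst).inter
      (((measurableSet_lt (hFm.comp measurable_fst) measurable_snd).inter
        (measurableSet_lt measurable_snd (hGm.comp measurable_fst))).union
       ((measurableSet_lt (hGm.comp measurable_fst) measurable_snd).inter
        (measurableSet_lt measurable_snd (hFm.comp measurable_fst))))
  have hTm : MeasurableSet T := by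
    have : T = Prod.swap ⁻¹' S := by
      rw [hST]; ext p; simp
    rw [this]
    exact hSm.preimage measurable_swap
  -- sections of S
  have hSsec : ∀ x : ℝ, volume (Prod.mk x ⁻¹' S)
      = I.indicator (fun x => ENNReal.ofReal |f x - g x|) x := by
    intro x
    by_cases hx : x ∈ I
    · have : Prod.mk x ⁻¹' S = Set.Ioo (f x) (g x) ∪ Set.Ioo (g x) (f x) := by
        ext y
        simp only [hS_def, Set.mem_preimage, Set.mem_setOf_eq, Set.mem_union, Set.mem_Ioo]
        tauto
      rw [this, vol_Ioo_union, Set.indicator_of_mem hx]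
    · have : Prod.mk x ⁻¹' S = ∅ := by
        ext y
        simp only [hS_def, Set.mem_preimage, Set.mem_setOf_eq, Set.mem_empty_iff_false]
        tauto
      rw [this, Set.indicator_of_notMem hx]
      simp
  have hTsec : ∀ y : ℝ, volume (Prod.mk y ⁻¹' T)
      = J.indicator (fun y => ENNReal.ofReal |f' y - g' y|) y := by
    intro y
    by_cases hy : y ∈ J
    · have : Prod.mk y ⁻¹' T = Set.Ioo (f' y) (g' y) ∪ Set.Ioo (g' y) (f' y) := by
        ext x
        simp only [hT_def, Set.mem_preimage, Set.mem_setOf_eq, Set.mem_union, Set.mem_Ioo]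
        tauto
      rw [this, vol_Ioo_union, Set.indicator_of_mem hy]
    · have : Prod.mk y ⁻¹' T = ∅ := by
        ext x
        simp only [hT_def, Set.mem_preimage, Set.mem_setOf_eq, Set.mem_empty_iff_false]
        tauto
      rw [this, Set.indicator_of_notMem hy]
      simp
  -- compute both sides as product measures
  have h1 : ∫⁻ x in I, ENNReal.ofReal |f x - g x| = (volume.prod volume) S := by
    rw [Measure.prod_apply hSm]
    rw [← lintegral_indicator hIm]
    exact lintegral_congr fun x => (hSsec x).symm
  have h2 : ∫⁻ y in J, ENNReal.ofReal |f' y - g' y| = (volume.prod volume) T := by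
    rw [Measure.prod_apply hTm]
    rw [← lintegral_indicator hJm]
    exact lintegral_congr fun y => (hTsec y).symm
  rw [h1, h2, hST]
  exact Measure.measurePreserving_swap.measure_preimage hTm.nullMeasurableSet
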